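/- Let f be a Boolean monomial system whose dependency graph is strongly connected with loop number t ≥ 1. Then f is a fixed point system if and only if t = 1. -/

import Mathlib

/-- `hasWalk E m a b` means there is a walk of length `m` from `a` to `b`
in the directed graph with edge relation `E` (walks of length 0 allowed). -/
def hasWalk {V : Type*} (E : V → V → Prop) : ℕ → V → V → Prop
  | 0 => fun a b => a = b
  | m + 1 => fun a b => ∃ c, E a c ∧ hasWalk E m c b

/-- A directed graph is strongly connected if there is a walk between any
two vertices. -/
def StronglyConnected {V : Type*} (E : V → V → Prop) : Prop :=
  ∀ a b : V, ∃ m, hasWalk E m a b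

/-- The loop number at a vertex `a`: the minimum `t ≥ 1` arising as the
difference of lengths of two closed walks at `a`, and `0` if there is no
closed walk of length `≥ 1` at `a` (so no such difference exists). -/
noncomputable def loopNumAt {V : Type*} (E : V → V → Prop) (a : V) : ℕ :=
  sInf {t | 1 ≤ t ∧ ∃ p q, hasWalk E p a a ∧ hasWalk E q a a ∧ p = q + t}

/-- Evaluation of a monomial coordinate function: `none` is the constant 0,
`some S` is the square-free monomial `∏ j ∈ S, x j` (empty product = 1). -/
def monEval {ι : Type*} (c : Option (Finset ι)) (x : ι → ZMod 2) : ZMod 2 :=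
  match c with
  | none => 0
  | some S => ∏ j ∈ S, x j

/-- The Boolean monomial system determined by the coordinate data `M`. -/
def sysEval {ι : Type*} (M : ι → Option (Finset ι)) (x : ι → ZMod 2) : ι → ZMod 2 :=
  fun i => monEval (M i) x

/-- Edge relation of the dependency graph of a Boolean monomial system:
`i → j` iff `f i ≠ 0` and `x j` is a factor of `f i`. -/
def depEdge {ι : Type*} (M : ι → Option (Finset ι)) (i j : ι) : Prop :=
  ∃ S, M i = some S ∧ j ∈ S

/-- A map is a fixed point system if every trajectory reaches a fixed point. -/
def FixedPointSystem {α : Type*} (F : α → α) : Prop :=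
  ∀ a, ∃ m, F^[m + 1] a = F^[m] a

/-- A glueing of the Boolean monomial system `M₂` (in variables `y`) to the
Boolean monomial system `M₁` (in variables `x`): the `x`-coordinates are
those of `M₁`, and the `i`-th `y`-coordinate is `g i` multiplied by the
monomial in the `x`-variables given by `T i` (and is `0` when `g i = 0`). -/
def glue {r s : ℕ} (M₁ : Fin r → Option (Finset (Fin r)))
    (M₂ : Fin s → Option (Finset (Fin s))) (T : Fin s → Finset (Fin r)) :
    (Fin r ⊕ Fin s) → Option (Finset (Fin r ⊕ Fin s))
  | .inl i => (M₁ i).map (Finset.image Sum.inl)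
  | .inr i => (M₂ i).map (fun S => S.image Sum.inr ∪ (T i).image Sum.inl)

section graph
variable {V : Type*} {E : V → V → Prop}

lemma hasWalk_trans {m k : ℕ} {a b c : V} (h1 : hasWalk E m a b) (h2 : hasWalk E k b c) :
    hasWalk E (m + k) a c := by
  induction m generalizing a with
  | zero => cases h1; simpa using h2
  | succ m ih =>
    obtain ⟨d, hd, hw⟩ := h1
    rw [Nat.succ_add]
    exact ⟨d, hd, ih hw⟩

lemma hasWalk_mul {m : ℕ} {a : V} (h : hasWalk E m a a) (k : ℕ) : hasWalk E (k * m) a a := by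
  induction k with
  | zero => simp [hasWalk]
  | succ k ih =>
    have := hasWalk_trans h ih
    rwa [show m + k * m = (k + 1) * m by ring] at this

lemma hasWalk_succ_iff {m : ℕ} {i k : V} :
    hasWalk E (m + 1) i k ↔ ∃ j, hasWalk E m i j ∧ E j k := by
  constructor
  · intro h
    induction m generalizing i with
    | zero => obtain ⟨c, hc, h0⟩ := h; cases h0; exact ⟨i, rfl, hc⟩
    | succ m ih =>
      obtain ⟨c, hc, hw⟩ := h
      obtain ⟨j, hj, hjk⟩ := ih hw
      exact ⟨j, ⟨c, hc, hj⟩, hjk⟩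
  · rintro ⟨j, hw, he⟩
    exact hasWalk_trans hw ⟨k, he, rfl⟩

end graph

lemma zmod2_cases : ∀ c : ZMod 2, c = 0 ∨ c = 1 := by decide

lemma zmod2_pow (c : ZMod 2) (k : ℕ) : c ^ (k + 1) = c := by
  induction k with
  | zero => exact pow_one c
  | succ k ih =>
    rw [pow_succ, ih]
    rcases zmod2_cases c with rfl | rfl <;> decide

lemma monEval_some {ι : Type*} (S : Finset ι) (x : ι → ZMod 2) :
    monEval (some S) x = ∏ j ∈ S, x j := rfl

/-- A Boolean monomial system whose dependency graph is strongly
connected with loop number `t ≥ 1` is a fixed point system iff `t = 1`. -/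
theorem statement11 {n : ℕ} (hn : 1 ≤ n) (M : Fin n → Option (Finset (Fin n)))
    (hsc : StronglyConnected (depEdge M)) (t : ℕ) (ht : 1 ≤ t)
    (hloop : ∀ a, loopNumAt (depEdge M) a = t) :
    FixedPointSystem (sysEval M) ↔ t = 1 := by
  classical
  -- closed-walk pairs realizing the loop number
  have hmem : ∀ a : Fin n, ∃ q, hasWalk (depEdge M) (q + t) a a ∧ hasWalk (depEdge M) q a a := by
    intro a
    have h0 := hloop a
    rw [loopNumAt] at h0
    have hne : {t' | 1 ≤ t' ∧ ∃ p q, hasWalk (depEdge M) p a a ∧ hasWalk (depEdge M) q a a ∧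
        p = q + t'}.Nonempty := by
      by_contra h
      rw [Set.not_nonempty_iff_eq_empty] at h
      rw [h, Nat.sInf_empty] at h0; omega
    have hm := h0 ▸ Nat.sInf_mem hne
    obtain ⟨-, p, q, hp, hq, rfl⟩ := hm
    exact ⟨q, hp, hq⟩
  -- every coordinate is a nonempty monomial
  have hS : ∀ i, ∃ S, M i = some S ∧ S.Nonempty := by
    intro i
    obtain ⟨q, hp, -⟩ := hmem i
    obtain ⟨k, hk⟩ : ∃ k, q + t = k + 1 := ⟨q + t - 1, by omega⟩
    rw [hk] at hp
    simp only [hasWalk] at hp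
    obtain ⟨c, hc, -⟩ := hp
    obtain ⟨S, hSi, hcS⟩ := hc
    exact ⟨S, hSi, c, hcS⟩
  -- all closed walk lengths at a vertex are congruent mod t
  have hdvd : ∀ (a : Fin n) (p q : ℕ), hasWalk (depEdge M) p a a → hasWalk (depEdge M) q a a →
      q ≤ p → t ∣ p - q := by
    intro a p q hp hq hqp
    obtain ⟨q₀, hp₀, hq₀⟩ := hmem a
    by_contra hnd
    have hrd : t * ((p - q) / t) + (p - q) % t = p - q := Nat.div_add_mod _ t
    set u := (p - q) / t with hu
    set r := (p - q) % t with hr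
    have hr1 : 1 ≤ r := by
      rcases Nat.eq_zero_or_pos r with h | h
      · exact absurd ⟨u, by omega⟩ hnd
      · omega
    have hrt : r < t := Nat.mod_lt _ (by omega)
    have WQ : hasWalk (depEdge M) (q + u * (q₀ + t)) a a := hasWalk_trans hq (hasWalk_mul hp₀ u)
    have WP : hasWalk (depEdge M) (p + u * q₀) a a := hasWalk_trans hp (hasWalk_mul hq₀ u)
    have key : p + u * q₀ = (q + u * (q₀ + t)) + r := by
      have hpd : p = q + (p - q) := by omega
      rw [hpd, ← hrd]; ring
    have hrmem : r ∈ {t' | 1 ≤ t' ∧ ∃ p q, hasWalk (depEdge M) p a a ∧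
        hasWalk (depEdge M) q a a ∧ p = q + t'} := ⟨hr1, _, _, WP, WQ, key⟩
    have hle := Nat.sInf_le hrmem
    have h0 := hloop a
    rw [loopNumAt] at h0
    omega
  have hcongr : ∀ (a : Fin n) (p q : ℕ), hasWalk (depEdge M) p a a →
      hasWalk (depEdge M) q a a → (p : ZMod t) = (q : ZMod t) := by
    have main : ∀ (a : Fin n) (p q : ℕ), hasWalk (depEdge M) p a a →
        hasWalk (depEdge M) q a a → q ≤ p → (p : ZMod t) = (q : ZMod t) := by
      intro a p q hp hq h
      exact (ZMod.natCast_eq_natCast_iff _ _ _).mpr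
        (Nat.ModEq.symm ((Nat.modEq_iff_dvd' h).mpr (hdvd a p q hp hq h)))
    intro a p q hp hq
    rcases le_total q p with h | h
    · exact main a p q hp hq h
    · exact (main a q p hq hp h).symm
  -- choose explicit walks witnessing strong connectivity
  choose w hw using hsc
  -- the iteration formula
  have hiter : ∀ (m : ℕ) (x : Fin n → ZMod 2) (i : Fin n),
      (sysEval M)^[m] x i = ∏ j ∈ Finset.univ.filter (fun j => hasWalk (depEdge M) m i j), x j := by
    intro m
    induction m with
    | zero =>
      intro x i
      have hfe : Finset.univ.filter (fun j => hasWalk (depEdge M) 0 i j) = {i} := by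
        ext j; rw [Finset.mem_filter, Finset.mem_singleton]; simp [hasWalk, eq_comm]
      simp [hfe]
    | succ m ih =>
      intro x i
      rw [Function.iterate_succ_apply, ih]
      set A := ∏ j ∈ Finset.univ.filter (fun j => hasWalk (depEdge M) m i j), sysEval M x j with hA
      set B := ∏ j ∈ Finset.univ.filter (fun j => hasWalk (depEdge M) (m+1) i j), x j with hB
      have h0 : A = 0 ↔ B = 0 := by
        rw [hA, hB, Finset.prod_eq_zero_iff, Finset.prod_eq_zero_iff]
        constructor
        · rintro ⟨j, hj, hfj⟩
          rw [Finset.mem_filter] at hj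
          obtain ⟨Sj, hSj, -⟩ := hS j
          rw [show sysEval M x j = monEval (M j) x from rfl, hSj, monEval_some,
            Finset.prod_eq_zero_iff] at hfj
          obtain ⟨k, hkS, hxk⟩ := hfj
          refine ⟨k, ?_, hxk⟩
          rw [Finset.mem_filter]
          exact ⟨Finset.mem_univ _, hasWalk_succ_iff.mpr ⟨j, hj.2, Sj, hSj, hkS⟩⟩
        · rintro ⟨k, hk, hxk⟩
          rw [Finset.mem_filter] at hk
          obtain ⟨j, hwj, Sj, hSj, hkS⟩ := hasWalk_succ_iff.mp hk.2
          refine ⟨j, Finset.mem_filter.mpr ⟨Finset.mem_univ _, hwj⟩, ?_⟩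
          rw [show sysEval M x j = monEval (M j) x from rfl, hSj, monEval_some]
          exact Finset.prod_eq_zero hkS hxk
      rcases zmod2_cases A with hA0 | hA1
      · rw [hA0]; exact (h0.mp hA0).symm
      · rcases zmod2_cases B with hB0 | hB1
        · rw [h0.mpr hB0] at hA1; exact absurd hA1 (by decide)
        · rw [hA1, hB1]
  constructor
  · -- FixedPointSystem → t = 1
    intro hFPS
    by_contra hne1
    have ht2 : 2 ≤ t := by omega
    haveI : NeZero t := ⟨by omega⟩
    haveI : Fact (1 < t) := ⟨by omega⟩
    set a : Fin n := ⟨0, hn⟩ with ha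
    set X : ℕ → Fin n → ZMod 2 :=
      fun k i => if ((w a i : ZMod t) = -(k : ZMod t)) then 0 else 1 with hX
    have hlevel : ∀ (m : ℕ) (i : Fin n), hasWalk (depEdge M) m a i →
        (m : ZMod t) = (w a i : ZMod t) := by
      intro m i hm
      have h1 : hasWalk (depEdge M) (m + w i a) a a := hasWalk_trans hm (hw i a)
      have h2 : hasWalk (depEdge M) (w a i + w i a) a a := hasWalk_trans (hw a i) (hw i a)
      have h3 := hcongr a _ _ h1 h2
      push_cast at h3
      exact add_right_cancel h3
    have hedge : ∀ i j, depEdge M i j → (w a j : ZMod t) = (w a i : ZMod t) + 1 := by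
      intro i j hij
      have h1 : hasWalk (depEdge M) (w a i + 1) a j :=
        hasWalk_trans (hw a i) ⟨j, hij, rfl⟩
      have h2 := hlevel _ _ h1
      push_cast at h2
      exact h2.symm
    have hwa : (w a a : ZMod t) = 0 := by
      have h0 : hasWalk (depEdge M) 0 a a := rfl
      have := hlevel 0 a h0
      simpa using this.symm
    have hstep : ∀ k, sysEval M (X k) = X (k + 1) := by
      intro k
      funext i
      obtain ⟨Si, hSi, j₀, hj₀⟩ := hS i
      have hall : ∀ j ∈ Si, (w a j : ZMod t) = (w a i : ZMod t) + 1 :=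
        fun j hj => hedge i j ⟨Si, hSi, hj⟩
      rw [show sysEval M (X k) i = monEval (M i) (X k) from rfl, hSi, monEval_some]
      by_cases hc : (w a i : ZMod t) = -((k : ZMod t) + 1)
      · have hj0 : X k j₀ = 0 := by
          have hcond : ((w a j₀ : ℕ) : ZMod t) = -((k : ℕ) : ZMod t) := by
            rw [hall j₀ hj₀, hc]; ring
          show (if ((w a j₀ : ZMod t) = -((k : ℕ) : ZMod t)) then (0 : ZMod 2) else 1) = 0
          rw [if_pos hcond]
        have hcond2 : ((w a i : ℕ) : ZMod t) = -(((k + 1) : ℕ) : ZMod t) := by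
          push_cast
          rw [hc]
        rw [Finset.prod_eq_zero hj₀ hj0]
        show (0 : ZMod 2) = if ((w a i : ZMod t) = -(((k + 1) : ℕ) : ZMod t)) then 0 else 1
        rw [if_pos hcond2]
      · have hone : ∀ j ∈ Si, X k j = 1 := by
          intro j hj
          have hcond : ¬ ((w a j : ℕ) : ZMod t) = -((k : ℕ) : ZMod t) := by
            rw [hall j hj]
            intro hcon
            apply hc
            linear_combination hcon
          show (if ((w a j : ZMod t) = -((k : ℕ) : ZMod t)) then (0 : ZMod 2) else 1) = 1
          rw [if_neg hcond]
        have hcond2 : ¬ ((w a i : ℕ) : ZMod t) = -(((k + 1) : ℕ) : ZMod t) := by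
          intro hcon
          apply hc
          push_cast at hcon
          linear_combination hcon
        rw [Finset.prod_eq_one hone]
        show (1 : ZMod 2) = if ((w a i : ZMod t) = -(((k + 1) : ℕ) : ZMod t)) then 0 else 1
        rw [if_neg hcond2]
    have hiterX : ∀ m, (sysEval M)^[m] (X 0) = X m := by
      intro m
      induction m with
      | zero => rfl
      | succ m ih => rw [Function.iterate_succ_apply', ih, hstep]
    obtain ⟨m, hm⟩ := hFPS (X 0)
    rw [hiterX, hiterX] at hm
    have hprop : ∀ j, X (m + j + 1) = X (m + j) := by
      intro j
      induction j with
      | zero => simpa using hm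
      | succ j ih =>
        have h2 := congrArg (sysEval M) ih
        rw [hstep, hstep] at h2
        have e1 : m + j + 1 + 1 = m + (j+1) + 1 := by omega
        have e2 : m + j + 1 = m + (j+1) := by omega
        rw [e1, e2] at h2
        exact h2
    have hjm : m + (m * t - m) = m * t := by
      have h1 : m ≤ m * t := Nat.le_mul_of_pos_right m (by omega)
      omega
    have heq : X (m * t + 1) = X (m * t) := by
      have := hprop (m * t - m)
      rwa [hjm] at this
    have hval1 : X (m * t) a = 0 := by
      have hcond : ((w a a : ℕ) : ZMod t) = -((m * t : ℕ) : ZMod t) := by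
        rw [hwa]; push_cast; rw [ZMod.natCast_self]; ring
      show (if ((w a a : ZMod t) = -((m * t : ℕ) : ZMod t)) then (0 : ZMod 2) else 1) = 0
      rw [if_pos hcond]
    have hval2 : X (m * t + 1) a = 1 := by
      have hcond : ¬ ((w a a : ℕ) : ZMod t) = -((m * t + 1 : ℕ) : ZMod t) := by
        rw [hwa]
        intro hcon
        push_cast at hcon
        rw [ZMod.natCast_self] at hcon
        have h1 : (1 : ZMod t) = 0 := by linear_combination hcon
        exact one_ne_zero h1
      show (if ((w a a : ZMod t) = -((m * t + 1 : ℕ) : ZMod t)) then (0 : ZMod 2) else 1) = 1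
      rw [if_neg hcond]
    have := congrFun heq a
    rw [hval1, hval2] at this
    exact absurd this (by decide)
  · -- t = 1 → FixedPointSystem
    intro ht1
    subst ht1
    set a : Fin n := ⟨0, hn⟩ with ha
    obtain ⟨q₀, hp₀, hq₀⟩ := hmem a
    have hbig : ∀ m, q₀ * q₀ ≤ m → hasWalk (depEdge M) m a a := by
      intro m hm
      rcases Nat.eq_zero_or_pos q₀ with h0 | h0
      · subst h0
        have h1 : hasWalk (depEdge M) 1 a a := by simpa using hp₀
        have h2 := hasWalk_mul h1 m
        simpa using h2
      · set k := m / q₀ with hk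
        set j := m % q₀ with hj
        have hdm : q₀ * k + j = m := Nat.div_add_mod m q₀
        have hjq : j < q₀ := Nat.mod_lt _ h0
        have hkq : q₀ ≤ k := by
          rw [hk]
          exact (Nat.le_div_iff_mul_le h0).mpr hm
        have W1 := hasWalk_mul hq₀ (k - j)
        have W2 := hasWalk_mul hp₀ j
        have W := hasWalk_trans W1 W2
        have harith : (k - j) * q₀ + j * (q₀ + 1) = m := by
          have h1 : (k - j) * q₀ = k * q₀ - j * q₀ := Nat.sub_mul k j q₀
          have h2 : j * (q₀ + 1) = j * q₀ + j := by ring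
          have h4 : q₀ * k = k * q₀ := Nat.mul_comm q₀ k
          rw [h4] at hdm
          have h3 : j * q₀ ≤ k * q₀ := Nat.mul_le_mul_right _ (by omega)
          rw [h1, h2]
          generalize hKQ : k * q₀ = K at hdm h3
          generalize hJQ : j * q₀ = J at hdm h3 ⊢
          omega
        rwa [harith] at W
    have hNall : ∀ i j, hasWalk (depEdge M)
        (q₀ * q₀ + Finset.univ.sup (fun i => w i a) + Finset.univ.sup (fun j => w a j)) i j := by
      intro i j
      set B1 := Finset.univ.sup (fun i => w i a) with hB1
      set B2 := Finset.univ.sup (fun j => w a j) with hB2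
      have hb1 : w i a ≤ B1 := Finset.le_sup (f := fun i => w i a) (Finset.mem_univ i)
      have hb2 : w a j ≤ B2 := Finset.le_sup (f := fun j => w a j) (Finset.mem_univ j)
      have hmid := hbig (q₀ * q₀ + B1 + B2 - w i a - w a j) (by omega)
      have W := hasWalk_trans (hw i a) (hasWalk_trans hmid (hw a j))
      rwa [show w i a + ((q₀ * q₀ + B1 + B2 - w i a - w a j) + w a j)
        = q₀ * q₀ + B1 + B2 by omega] at W
    set N := q₀ * q₀ + Finset.univ.sup (fun i => w i a) + Finset.univ.sup (fun j => w a j) with hN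
    intro x
    refine ⟨N, ?_⟩
    have hconstset : ∀ i : Fin n,
        Finset.univ.filter (fun j => hasWalk (depEdge M) N i j) = Finset.univ :=
      fun i => Finset.filter_true_of_mem (fun j _ => hNall i j)
    set c := ∏ j ∈ Finset.univ, x j with hc
    have hyc : ∀ i', (sysEval M)^[N] x i' = c := by
      intro i'; rw [hiter, hconstset]
    funext i
    rw [Function.iterate_succ_apply']
    obtain ⟨Si, hSi, hSine⟩ := hS i
    have hfix : sysEval M ((sysEval M)^[N] x) i = c := by
      rw [show sysEval M ((sysEval M)^[N] x) i = monEval (M i) ((sysEval M)^[N] x) from rfl,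
        hSi, monEval_some]
      calc ∏ k ∈ Si, (sysEval M)^[N] x k = ∏ k ∈ Si, c :=
            Finset.prod_congr rfl (fun k _ => hyc k)
        _ = c ^ Si.card := Finset.prod_const c
        _ = c := by
            obtain ⟨d, hd⟩ : ∃ d, Si.card = d + 1 :=
              ⟨Si.card - 1, by have := Finset.card_pos.mpr hSine; omega⟩
            rw [hd, zmod2_pow]
    rw [hfix, hyc i]
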